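/- arXiv:1103.3641 — 4 statements merged into one kernel-verified Lean document; each statement's English description precedes it below -/
import Mathlib

section
/- Let H1 be a parity-check matrix of length n, and define the 2n-column matrix H2 as the block matrix with first block row [H1 | 0] and second block row [I_n | I_n]. If p = (q, r) ∈ ℝ^{2n} lies in the fundamental cone K(H2), then q = r and q ∈ K(H1). -/
open Finset

def fundCone {J I : Type*} [Fintype I] [DecidableEq I]
    (H : J → I → ZMod 2) : Set (I → ℝ) :=
  {x | (∀ i, 0 ≤ x i) ∧
    ∀ j ℓ, H j ℓ = 1 →
      x ℓ ≤ ∑ i ∈ Finset.univ.filter (fun i => H j i = 1 ∧ i ≠ ℓ), x i}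
theorem stmt4 {J I : Type*} [Fintype I] [DecidableEq I]
    (H1 : J → I → ZMod 2)
    (p : I ⊕ I → ℝ)
    (hp : p ∈ fundCone (Sum.elim (fun j => Sum.elim (H1 j) (fun _ => 0))
          (fun k => fun i => if i = Sum.inl k ∨ i = Sum.inr k then 1 else 0))) :
    (∀ i, p (Sum.inl i) = p (Sum.inr i)) ∧
    (fun i => p (Sum.inl i)) ∈ fundCone H1 := by
  obtain ⟨hnn, hrows⟩ := hp
  constructor
  · intro k
    have h1 := hrows (Sum.inr k) (Sum.inl k) (by simp)
    have h2 := hrows (Sum.inr k) (Sum.inr k) (by simp)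
    have e1 : (Finset.univ.filter (fun i =>
        Sum.elim (fun j => Sum.elim (H1 j) (fun _ => 0))
          (fun k => fun i => if i = Sum.inl k ∨ i = Sum.inr k then 1 else 0)
          (Sum.inr k) i = 1 ∧ i ≠ Sum.inl k)) = {Sum.inr k} := by
      ext i
      rcases i with a | b <;> simp [Sum.elim]
    have e2 : (Finset.univ.filter (fun i =>
        Sum.elim (fun j => Sum.elim (H1 j) (fun _ => 0))
          (fun k => fun i => if i = Sum.inl k ∨ i = Sum.inr k then 1 else 0)
          (Sum.inr k) i = 1 ∧ i ≠ Sum.inr k)) = {Sum.inl k} := by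
      ext i
      rcases i with a | b <;> simp [Sum.elim]
    rw [e1, Finset.sum_singleton] at h1
    rw [e2, Finset.sum_singleton] at h2
    linarith
  · refine ⟨fun i => hnn _, fun j ℓ hjl => ?_⟩
    have h := hrows (Sum.inl j) (Sum.inl ℓ) (by simpa using hjl)
    refine h.trans_eq ?_
    rw [Finset.sum_filter, Finset.sum_filter, Fintype.sum_sum_type]
    simp
end

section
/- Let H be a binary m×n parity-check matrix such that a subset of its rows forms the incidence matrix of a partial (w_c, λ) design with λ ≥ 1: every column index is contained in exactly w_c of these rows' supports, and every pair of distinct column indices is contained in at most λ of these rows' supports. Then every nonzero x in the fundamental cone K(H) satisfies w_maxfrac(x) ≥ 1 + w_c/λ. -/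
open Finset

noncomputable def wmaxfrac {I : Type*} [Fintype I] [Nonempty I] (x : I → ℝ) : ℝ :=
  (∑ i, x i) / Finset.univ.sup' Finset.univ_nonempty x
theorem stmt6 {J I : Type*} [Fintype J] [Fintype I] [DecidableEq I] [Nonempty I]
    (H : J → I → ZMod 2) (S : Finset J) (wc lam : ℕ) (hlam : 1 ≤ lam)
    (hcol : ∀ i, (S.filter fun j => H j i = 1).card = wc)
    (hpair : ∀ i i' : I, i ≠ i' → (S.filter fun j => H j i = 1 ∧ H j i' = 1).card ≤ lam)
    (x : I → ℝ) (hx : x ∈ fundCone H) (hx0 : x ≠ 0) :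
    1 + (wc : ℝ) / lam ≤ wmaxfrac x := by
  obtain ⟨hpos, hrow⟩ := hx
  have hne : (Finset.univ : Finset I).Nonempty := Finset.univ_nonempty
  obtain ⟨ℓ, -, hℓ⟩ := Finset.exists_mem_eq_sup' hne x
  have hMpos : 0 < Finset.univ.sup' hne x := by
    obtain ⟨i, hi⟩ := Function.ne_iff.mp hx0
    exact lt_of_lt_of_le (lt_of_le_of_ne (hpos i) (Ne.symm hi))
      (Finset.le_sup' x (Finset.mem_univ i))
  have hxℓ : x ℓ = Finset.univ.sup' hne x := hℓ.symm
  have hlamR : (0:ℝ) < lam := by exact_mod_cast Nat.lt_of_lt_of_le Nat.zero_lt_one hlam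
  set T := S.filter (fun j => H j ℓ = 1) with hT
  have hTcard : T.card = wc := hcol ℓ
  have key : (wc:ℝ) * x ℓ ≤ (lam:ℝ) * ∑ i ∈ Finset.univ.filter (· ≠ ℓ), x i := by
    have h1 : (wc:ℝ) * x ℓ ≤
        ∑ j ∈ T, ∑ i ∈ Finset.univ.filter (fun i => H j i = 1 ∧ i ≠ ℓ), x i := by
      rw [← hTcard]
      have := Finset.card_nsmul_le_sum T
        (fun j => ∑ i ∈ Finset.univ.filter (fun i => H j i = 1 ∧ i ≠ ℓ), x i) (x ℓ)
        (fun j hj => hrow j ℓ (Finset.mem_filter.mp hj).2)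
      simpa [nsmul_eq_mul] using this
    have h2 : ∑ j ∈ T, ∑ i ∈ Finset.univ.filter (fun i => H j i = 1 ∧ i ≠ ℓ), x i
        = ∑ i, ((T.filter (fun j => H j i = 1 ∧ i ≠ ℓ)).card : ℝ) * x i := by
      simp only [Finset.sum_filter]
      rw [Finset.sum_comm]
      refine Finset.sum_congr rfl fun i _ => ?_
      rw [← Finset.sum_filter, Finset.sum_const, nsmul_eq_mul]
    have h3 : ∑ i, ((T.filter (fun j => H j i = 1 ∧ i ≠ ℓ)).card : ℝ) * x i
        ≤ ∑ i ∈ Finset.univ.filter (· ≠ ℓ), (lam:ℝ) * x i := by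
      rw [Finset.sum_filter]
      refine Finset.sum_le_sum fun i _ => ?_
      by_cases hiℓ : i = ℓ
      · simp [hiℓ]
      · rw [if_pos hiℓ]
        refine mul_le_mul_of_nonneg_right ?_ (hpos i)
        have hsub : T.filter (fun j => H j i = 1 ∧ i ≠ ℓ)
            ⊆ S.filter (fun j => H j i = 1 ∧ H j ℓ = 1) := by
          intro j hj
          simp only [hT, Finset.mem_filter, Finset.filter_filter] at hj ⊢
          tauto
        calc ((T.filter (fun j => H j i = 1 ∧ i ≠ ℓ)).card : ℝ)
            ≤ ((S.filter (fun j => H j i = 1 ∧ H j ℓ = 1)).card : ℝ) := by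
              exact_mod_cast Finset.card_le_card hsub
          _ ≤ (lam : ℝ) := by exact_mod_cast hpair i ℓ hiℓ
    calc (wc:ℝ) * x ℓ ≤ _ := h1
      _ = _ := h2
      _ ≤ _ := h3
      _ = (lam:ℝ) * ∑ i ∈ Finset.univ.filter (· ≠ ℓ), x i := by
          rw [Finset.mul_sum]
  rw [wmaxfrac, le_div_iff₀ hMpos]
  have hsplit : ∑ i, x i = x ℓ + ∑ i ∈ Finset.univ.filter (· ≠ ℓ), x i := by
    rw [Finset.filter_ne', Finset.add_sum_erase _ x (Finset.mem_univ ℓ)]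
  have h4 : (wc:ℝ)/lam * x ℓ ≤ ∑ i ∈ Finset.univ.filter (· ≠ ℓ), x i := by
    rw [div_mul_eq_mul_div, div_le_iff₀ hlamR, mul_comm _ (lam:ℝ)]
    exact key
  calc (1 + (wc:ℝ)/lam) * Finset.univ.sup' hne x
      = x ℓ + (wc:ℝ)/lam * x ℓ := by rw [hxℓ]; ring
    _ ≤ x ℓ + ∑ i ∈ Finset.univ.filter (· ≠ ℓ), x i := by linarith
    _ = ∑ i, x i := hsplit.symm
end

section
/- Let x ∈ ℝ^n be a nonzero nonnegative vector such that (Σ_i x_i)²/(Σ_i x_i²) = (Σ_i x_i)/(max_i x_i). Then x is a nonnegative scalar multiple of a 0-1 vector, i.e., every coordinate of x is either 0 or equal to max_i x_i. -/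
open Finset

theorem stmt9 {I : Type*} [Fintype I] [Nonempty I]
    (x : I → ℝ) (h0 : ∀ i, 0 ≤ x i) (hne : x ≠ 0)
    (heq : (∑ i, x i) ^ 2 / (∑ i, x i ^ 2) = wmaxfrac x) :
    ∀ i, x i = 0 ∨ x i = Finset.univ.sup' Finset.univ_nonempty x := by
  set M := Finset.univ.sup' Finset.univ_nonempty x with hM
  obtain ⟨i0, hi0⟩ : ∃ i, x i ≠ 0 := by
    by_contra h
    push_neg at h
    exact hne (funext h)
  have hi0' : 0 < x i0 := lt_of_le_of_ne (h0 i0) (Ne.symm hi0)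
  have hle : ∀ i, x i ≤ M := fun i => Finset.le_sup' x (mem_univ i)
  have hMpos : 0 < M := lt_of_lt_of_le hi0' (hle i0)
  have hA : 0 < ∑ i, x i := Finset.sum_pos' (fun i _ => h0 i) ⟨i0, mem_univ i0, hi0'⟩
  have hB : 0 < ∑ i, x i ^ 2 := Finset.sum_pos' (fun i _ => sq_nonneg _)
    ⟨i0, mem_univ i0, pow_pos hi0' 2⟩
  rw [wmaxfrac, ← hM, div_eq_div_iff hB.ne' hMpos.ne'] at heq
  have key : ∑ i, x i ^ 2 = (∑ i, x i) * M := by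
    have := heq
    nlinarith [heq]
  have hsum0 : ∑ i, x i * (M - x i) = 0 := by
    have : ∑ i, x i * (M - x i) = (∑ i, x i) * M - ∑ i, x i ^ 2 := by
      rw [Finset.sum_mul]
      rw [← Finset.sum_sub_distrib]
      congr 1; ext i; ring
    rw [this, key]; ring
  have hterm : ∀ i ∈ Finset.univ, x i * (M - x i) = 0 := by
    intro i _
    have := (Finset.sum_eq_zero_iff_of_nonneg (fun i _ =>
      mul_nonneg (h0 i) (sub_nonneg.2 (hle i)))).1 hsum0
    exact this i (mem_univ i)
  intro i
  rcases mul_eq_zero.1 (hterm i (mem_univ i)) with h | h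
  · exact Or.inl h
  · exact Or.inr (by linarith [sub_eq_zero.1 h])
end

section
/- Let H be a binary parity-check matrix of a code C in which every row has weight exactly 2, and suppose C ≠ {0}. Then the minimum max-fractional weight of H equals the minimum Hamming distance of C; in particular every nonzero x in the fundamental cone K(H) satisfies (Σ_i x_i)/(max_i x_i) ≥ d(C). -/
open Finset

section Aux

variable {J I : Type*} [Fintype I] [DecidableEq I] (H : J → I → ZMod 2)

lemma zmod2_cases (a : ZMod 2) : a = 0 ∨ a = 1 := by revert a; decide

/-- relation: two coordinates lie in the support of a common row -/
def RelH (a b : I) : Prop := ∃ j, H j a = 1 ∧ H j b = 1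

lemma filter_ne_eq (hrow : ∀ j, (Finset.univ.filter fun i => H j i = 1).card = 2)
    {j : J} {u v : I} (huv : u ≠ v) (hu : H j u = 1) (hv : H j v = 1) :
    (Finset.univ.filter fun i => H j i = 1 ∧ i ≠ u) = {v} := by
  obtain ⟨p, q, hpq, hset⟩ := Finset.card_eq_two.mp (hrow j)
  have hmemu : u ∈ ({p, q} : Finset I) := by rw [← hset]; simp [hu]
  have hmemv : v ∈ ({p, q} : Finset I) := by rw [← hset]; simp [hv]
  ext i
  simp only [mem_filter, mem_univ, true_and, mem_singleton]
  constructor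
  · rintro ⟨hi, hne⟩
    have hmemi : i ∈ ({p, q} : Finset I) := by rw [← hset]; simp [hi]
    simp only [mem_insert, mem_singleton] at hmemu hmemv hmemi
    rcases hmemu with rfl | rfl <;> rcases hmemv with rfl | rfl <;>
      rcases hmemi with rfl | rfl <;> tauto
  · rintro rfl; exact ⟨hv, huv.symm⟩

lemma cone_eq (hrow : ∀ j, (Finset.univ.filter fun i => H j i = 1).card = 2)
    {x : I → ℝ} (hx : x ∈ fundCone H) {j : J} {a b : I}
    (ha : H j a = 1) (hb : H j b = 1) : x a = x b := by
  by_cases hab : a = b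
  · rw [hab]
  · have h1 := hx.2 j a ha
    have h2 := hx.2 j b hb
    rw [filter_ne_eq H hrow hab ha hb, Finset.sum_singleton] at h1
    rw [filter_ne_eq H hrow (Ne.symm hab) hb ha, Finset.sum_singleton] at h2
    linarith

lemma cone_eq_eqv (hrow : ∀ j, (Finset.univ.filter fun i => H j i = 1).card = 2)
    {x : I → ℝ} (hx : x ∈ fundCone H) {a b : I}
    (h : Relation.EqvGen (RelH H) a b) : x a = x b := by
  induction h with
  | rel a b hab => obtain ⟨j, ha, hb⟩ := hab; exact cone_eq H hrow hx ha hb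
  | refl => rfl
  | symm _ _ _ ih => exact ih.symm
  | trans _ _ _ _ _ ih1 ih2 => exact ih1.trans ih2

lemma row_sum_pair (hrow : ∀ j, (Finset.univ.filter fun i => H j i = 1).card = 2)
    (c : I → ZMod 2) (j : J) :
    ∃ a b : I, a ≠ b ∧ H j a = 1 ∧ H j b = 1 ∧ (∑ i, H j i * c i) = c a + c b := by
  obtain ⟨a, b, hab, hset⟩ := Finset.card_eq_two.mp (hrow j)
  have ha : H j a = 1 := by
    have : a ∈ Finset.univ.filter fun i => H j i = 1 := by rw [hset]; simp
    simpa using this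
  have hb : H j b = 1 := by
    have : b ∈ Finset.univ.filter fun i => H j i = 1 := by rw [hset]; simp
    simpa using this
  refine ⟨a, b, hab, ha, hb, ?_⟩
  have hstep : ∀ i : I, H j i * c i = if H j i = 1 then c i else 0 := by
    intro i
    rcases zmod2_cases (H j i) with h | h <;> simp [h]
  calc ∑ i, H j i * c i = ∑ i, if H j i = 1 then c i else 0 := by
        exact Finset.sum_congr rfl fun i _ => hstep i
    _ = ∑ i ∈ Finset.univ.filter fun i => H j i = 1, c i := (Finset.sum_filter _ _).symm
    _ = c a + c b := by rw [hset, Finset.sum_pair hab]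

lemma codeword_const (hrow : ∀ j, (Finset.univ.filter fun i => H j i = 1).card = 2)
    {c : I → ZMod 2} (hcw : ∀ j, ∑ i, H j i * c i = 0) {j : J} {a b : I}
    (ha : H j a = 1) (hb : H j b = 1) : c a = c b := by
  by_cases hab : a = b
  · rw [hab]
  · obtain ⟨p, q, hpq, hp, hq, hsum⟩ := row_sum_pair H hrow c j
    have hsupp : (Finset.univ.filter fun i => H j i = 1) = {p, q} := by
      obtain ⟨p', q', hpq', hset⟩ := Finset.card_eq_two.mp (hrow j)
      have hpmem : p ∈ ({p', q'} : Finset I) := by rw [← hset]; simp [hp]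
      have hqmem : q ∈ ({p', q'} : Finset I) := by rw [← hset]; simp [hq]
      simp only [mem_insert, mem_singleton] at hpmem hqmem
      rw [hset]
      rcases hpmem with rfl | rfl <;> rcases hqmem with rfl | rfl <;>
        first | rfl | (exact absurd rfl hpq) | (exact Finset.pair_comm _ _)
  -- now a, b ∈ {p, q}
    have hamem : a ∈ ({p, q} : Finset I) := by rw [← hsupp]; simp [ha]
    have hbmem : b ∈ ({p, q} : Finset I) := by rw [← hsupp]; simp [hb]
    simp only [mem_insert, mem_singleton] at hamem hbmem
    have hz : c p + c q = 0 := by rw [← hsum]; exact hcw j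
    have hpq' : c p = c q := by
      rcases zmod2_cases (c p) with h1 | h1 <;> rcases zmod2_cases (c q) with h2 | h2 <;>
        simp_all
    rcases hamem with rfl | rfl <;> rcases hbmem with rfl | rfl <;> simp_all

end Aux

theorem stmt11 {J I : Type*} [Fintype I] [DecidableEq I] [Nonempty I]
    (H : J → I → ZMod 2)
    (hrow : ∀ j, (Finset.univ.filter fun i => H j i = 1).card = 2)
    (d : ℕ)
    (hex : ∃ c : I → ZMod 2, c ≠ 0 ∧ (∀ j, ∑ i, H j i * c i = 0) ∧ hammingNorm c = d)
    (hmin : ∀ c : I → ZMod 2, c ≠ 0 → (∀ j, ∑ i, H j i * c i = 0) → d ≤ hammingNorm c) :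
    (∀ x ∈ fundCone H, x ≠ 0 → (d : ℝ) ≤ wmaxfrac x) ∧
    (∃ x ∈ fundCone H, x ≠ 0 ∧ wmaxfrac x = d) := by
  classical
  constructor
  · intro x hx hxne
    obtain ⟨i0, -, hi0⟩ := Finset.exists_mem_eq_sup' Finset.univ_nonempty x
    set M := Finset.univ.sup' Finset.univ_nonempty x with hM
    have hMpos : 0 < M := by
      obtain ⟨i1, hi1⟩ : ∃ i, x i ≠ 0 := by
        by_contra h; push_neg at h; exact hxne (funext fun i => h i)
      have h1 := hx.1 i1
      have hle : x i1 ≤ M := Finset.le_sup' x (mem_univ i1)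
      exact lt_of_lt_of_le (lt_of_le_of_ne h1 (Ne.symm hi1)) hle
    set c : I → ZMod 2 := fun i => if Relation.EqvGen (RelH H) i0 i then 1 else 0 with hc
    have hc0 : c ≠ 0 := by
      intro h
      have : c i0 = 0 := by rw [h]; rfl
      simp [hc, Relation.EqvGen.refl] at this
    have hcw : ∀ j, ∑ i, H j i * c i = 0 := by
      intro j
      obtain ⟨a, b, hab, ha, hb, hsum⟩ := row_sum_pair H hrow c j
      rw [hsum]
      have hiff : Relation.EqvGen (RelH H) i0 a ↔ Relation.EqvGen (RelH H) i0 b := by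
        constructor
        · intro h; exact h.trans _ _ _ (Relation.EqvGen.rel _ _ ⟨j, ha, hb⟩)
        · intro h; exact h.trans _ _ _ (Relation.EqvGen.rel _ _ ⟨j, hb, ha⟩)
      by_cases hA : Relation.EqvGen (RelH H) i0 a
      · have hB := hiff.mp hA
        simp [hc, hA, hB]
        decide
      · have hB : ¬ Relation.EqvGen (RelH H) i0 b := fun h => hA (hiff.mpr h)
        simp [hc, hA, hB]
    have hd := hmin c hc0 hcw
    set S := Finset.univ.filter (fun i => Relation.EqvGen (RelH H) i0 i) with hS
    have hnorm : hammingNorm c = S.card := by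
      unfold hammingNorm
      congr 1
      ext i
      by_cases h : Relation.EqvGen (RelH H) i0 i <;> simp [hc, hS, h]
    have hxS : ∀ i ∈ S, x i = M := by
      intro i hi
      rw [hS, mem_filter] at hi
      rw [← cone_eq_eqv H hrow hx hi.2, ← hi0]
    have hsum : (S.card : ℝ) * M ≤ ∑ i, x i := by
      have h1 : ∑ i ∈ S, x i = (S.card : ℝ) * M := by
        rw [Finset.sum_congr rfl hxS, Finset.sum_const, nsmul_eq_mul]
      have h2 : ∑ i ∈ S, x i ≤ ∑ i, x i :=
        Finset.sum_le_sum_of_subset_of_nonneg (Finset.subset_univ S)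
          (fun i _ _ => hx.1 i)
      linarith
    rw [wmaxfrac, le_div_iff₀ hMpos]
    have hdS : (d : ℝ) ≤ S.card := by exact_mod_cast hnorm ▸ hd
    calc (d : ℝ) * M ≤ (S.card : ℝ) * M := by
          exact mul_le_mul_of_nonneg_right hdS hMpos.le
      _ ≤ ∑ i, x i := hsum
  · obtain ⟨c, hc0, hcw, hnorm⟩ := hex
    set x : I → ℝ := fun i => if c i = 0 then 0 else 1 with hxdef
    have hx01 : ∀ i, x i = 0 ∨ x i = 1 := by
      intro i; by_cases h : c i = 0 <;> simp [hxdef, h]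
    obtain ⟨i1, hi1⟩ : ∃ i, c i ≠ 0 := by
      by_contra h; push_neg at h; exact hc0 (funext fun i => h i)
    have hxi1 : x i1 = 1 := by simp [hxdef, hi1]
    have hxcone : x ∈ fundCone H := by
      constructor
      · intro i; rcases hx01 i with h | h <;> simp [h]
      · intro j ℓ hℓ
        obtain ⟨a, b, hab, ha, hb, -⟩ := row_sum_pair H hrow c j
        have hℓmem : ℓ = a ∨ ℓ = b := by
          obtain ⟨p, q, hpq, hset⟩ := Finset.card_eq_two.mp (hrow j)
          have h1 : ℓ ∈ ({p, q} : Finset I) := by rw [← hset]; simp [hℓ]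
          have h2 : a ∈ ({p, q} : Finset I) := by rw [← hset]; simp [ha]
          have h3 : b ∈ ({p, q} : Finset I) := by rw [← hset]; simp [hb]
          simp only [mem_insert, mem_singleton] at h1 h2 h3
          rcases h1 with rfl | rfl <;> rcases h2 with rfl | rfl <;>
            rcases h3 with rfl | rfl <;> tauto
        have key : ∀ u v : I, u ≠ v → H j u = 1 → H j v = 1 →
            x u ≤ ∑ i ∈ Finset.univ.filter (fun i => H j i = 1 ∧ i ≠ u), x i := by
          intro u v huv hu hv
          rw [filter_ne_eq H hrow huv hu hv, Finset.sum_singleton]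
          have : c u = c v := codeword_const H hrow hcw hu hv
          simp [hxdef, this]
        rcases hℓmem with rfl | rfl
        · exact key ℓ b hab hℓ hb
        · exact key ℓ a (Ne.symm hab) hℓ ha
    have hxne : x ≠ 0 := by
      intro h
      have : x i1 = 0 := by rw [h]; rfl
      rw [hxi1] at this; norm_num at this
    refine ⟨x, hxcone, hxne, ?_⟩
    have hsup : Finset.univ.sup' Finset.univ_nonempty x = 1 := by
      apply le_antisymm
      · apply Finset.sup'_le
        intro i _
        rcases hx01 i with h | h <;> simp [h]
      · calc (1 : ℝ) = x i1 := hxi1.symm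
          _ ≤ _ := Finset.le_sup' x (mem_univ i1)
    have hsum : ∑ i, x i = (d : ℝ) := by
      have h1 : ∑ i, x i = ∑ i, (if c i ≠ 0 then (1 : ℝ) else 0) := by
        apply Finset.sum_congr rfl
        intro i _
        by_cases h : c i = 0 <;> simp [hxdef, h]
      rw [h1, ← Finset.sum_filter, Finset.sum_const, nsmul_eq_mul, mul_one]
      rw [← hnorm]
      unfold hammingNorm
      norm_num
    rw [wmaxfrac, hsup, hsum, div_one]
end
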